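/- arXiv:math/0305250 — 3 statements merged into one kernel-verified Lean document; each statement's English description precedes it below -/
import Mathlib

section
/- For all integers k and l, the equality {e^k, e^l} = ⟨γ_{−k−1/2}, γ_{−l−1/2}⟩ holds; explicitly, ((−1)^k • single k (1:ℝ) · single l 1).coeff(−1), computed in ℝ((e)), equals (π/2) · ((Γ(1/2 − k))⁻¹ • single (−2k−1) (1:ℝ) · ((−2l−1) · (Γ(1/2 − l))⁻¹) • single (−2l−2) 1).coeff(−1), computed in ℝ((y)) with y = √x, where the first factor represents γ_{−k−1/2}(x) = x^{−k−1/2}/Γ(1/2−k) and the second represents the formal y-derivative of γ_{−l−1/2}(x). (This is the Proposition of §3.3: the linear transformation t*_T Hℝ → ℝ((√x))_odd defined on normalized basis elements by e^k ↦ γ_{−k−1/2}(x) is a symplectic embedding.) -/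
open HahnSeries Real

lemma sin_aux (k : ℤ) : Real.sin (π * (1/2 - (k:ℝ))) = (-1)^k := by
  have h : π * (1/2 - (k:ℝ)) = π/2 - k*π := by ring
  rw [h, Real.sin_pi_div_two_sub]
  simpa using Real.cos_sub_int_mul_pi 0 k

lemma ne_neg_nat (k : ℤ) (n : ℕ) : (1:ℝ)/2 - (k:ℝ) ≠ -n := by
  intro h
  have h2 : ((1 - 2*k : ℤ) : ℝ) = ((-(2*n) : ℤ) : ℝ) := by push_cast; linarith
  have := Int.cast_injective (α := ℝ) h2
  omega

lemma ne_neg_nat' (k : ℤ) (n : ℕ) : (1:ℝ)/2 + (k:ℝ) ≠ -n := by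
  intro h
  have h2 : ((1 + 2*k : ℤ) : ℝ) = ((-(2*n) : ℤ) : ℝ) := by push_cast; linarith
  have := Int.cast_injective (α := ℝ) h2
  omega

lemma hpow_aux (k : ℤ) : ((-1:ℝ)^k) * ((-1:ℝ)^k) = 1 := by
  rw [← zpow_add₀ (by norm_num : (-1:ℝ) ≠ 0), show k + k = 2*k by ring, zpow_mul]
  norm_num

lemma gamma_aux (k : ℤ) :
    π / 2 * ((Real.Gamma (1/2 - (k:ℝ)))⁻¹ * ((2*(k:ℝ)+1) * (Real.Gamma (3/2 + (k:ℝ)))⁻¹)) = (-1)^k := by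
  have hA : Real.Gamma (1/2 - (k:ℝ)) ≠ 0 := Real.Gamma_ne_zero (ne_neg_nat k)
  have hB : Real.Gamma (1/2 + (k:ℝ)) ≠ 0 := Real.Gamma_ne_zero (ne_neg_nat' k)
  have hk2 : (k:ℝ) + 1/2 ≠ 0 := by
    have := ne_neg_nat' k 0; intro h; apply this; push_cast; linarith
  have h1 : Real.Gamma (3/2 + (k:ℝ)) = ((k:ℝ)+1/2) * Real.Gamma (1/2 + k) := by
    have hne : (1:ℝ)/2 + (k:ℝ) ≠ 0 := by simpa using ne_neg_nat' k 0
    rw [show (3:ℝ)/2 + k = 1/2 + k + 1 by ring, Real.Gamma_add_one hne]; ring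
  have hAB : Real.Gamma (1/2 - (k:ℝ)) * Real.Gamma (1/2 + (k:ℝ)) = π * (-1)^k := by
    have h := Real.Gamma_mul_Gamma_one_sub (1/2 - (k:ℝ))
    rw [show (1:ℝ) - (1/2 - k) = 1/2 + k by ring, sin_aux k] at h
    rw [h, div_eq_mul_inv, inv_eq_of_mul_eq_one_right (hpow_aux k)]
  set A := Real.Gamma (1/2 - (k:ℝ)) with hAdef
  set B := Real.Gamma (1/2 + (k:ℝ)) with hBdef
  rw [h1]
  have hABinv : (A*B)⁻¹ = (-1)^k / π := by
    rw [hAB, mul_inv, inv_eq_of_mul_eq_one_right (hpow_aux k)]; ring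
  rw [mul_inv, show (Real.Gamma (1/2-(k:ℝ)))⁻¹ * ((2*(k:ℝ)+1) * (((k:ℝ)+1/2)⁻¹ * B⁻¹))
      = (2*(k:ℝ)+1) * ((k:ℝ)+1/2)⁻¹ * (A*B)⁻¹ by rw [mul_inv]; ring,
    hABinv, show (2*(k:ℝ)+1) * ((k:ℝ)+1/2)⁻¹ = 2 by
      rw [show 2*(k:ℝ)+1 = 2*((k:ℝ)+1/2) by ring, mul_assoc, mul_inv_cancel₀ hk2, mul_one]]
  rw [div_eq_mul_inv, div_eq_mul_inv,
    show π * 2⁻¹ * (2 * ((-1:ℝ)^k * π⁻¹)) = π * π⁻¹ * (2 * 2⁻¹) * (-1)^k by ring,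
    mul_inv_cancel₀ Real.pi_ne_zero, mul_inv_cancel₀ (by norm_num : (2:ℝ) ≠ 0), one_mul, one_mul]

lemma smul_single_one (r : ℝ) (a : ℤ) :
    r • (HahnSeries.single a (1:ℝ)) = HahnSeries.single a r := by
  ext n
  simp only [HahnSeries.coeff_smul, coeff_single, smul_eq_mul]
  split <;> simp

/-- The Proposition of §3.3: the map `e^k ↦ γ_{−k−1/2}(x)` is a symplectic
embedding, i.e. `{e^k, e^l} = ⟨γ_{−k−1/2}, γ_{−l−1/2}⟩` for all integers
`k, l`.  The left-hand side is computed in `ℝ((e))`, using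
`I (single k 1) = (−1)^k • single k 1`; the right-hand side is computed in
`ℝ((y))` with `y = √x`, where `γ_{−k−1/2}(x) = x^{−k−1/2}/Γ(1/2−k)` is
represented by `Γ(1/2 − k)⁻¹ • single (−2k−1) 1` and the formal `y`-derivative
of `γ_{−l−1/2}(x)` by `((−2l−1) · Γ(1/2 − l)⁻¹) • single (−2l−2) 1`. -/
theorem symplectic_embedding_divided_powers (k l : ℤ) :
    (((-1 : ℝ) ^ k • HahnSeries.single k (1 : ℝ)) * HahnSeries.single l (1 : ℝ)).coeff (-1) =
      Real.pi / 2 *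
        (((Real.Gamma (1 / 2 - (k : ℝ)))⁻¹ • HahnSeries.single (-2 * k - 1) (1 : ℝ) *
            (((-2 * (l : ℝ) - 1) * (Real.Gamma (1 / 2 - (l : ℝ)))⁻¹) •
              HahnSeries.single (-2 * l - 2) (1 : ℝ))).coeff (-1)) := by
  rw [smul_single_one, smul_single_one, smul_single_one, single_mul_single,
    single_mul_single]
  simp only [coeff_single]
  by_cases h : k + l = -1
  · have hl : l = -1 - k := by omega
    subst hl
    rw [if_pos (by omega), if_pos (by omega)]
    have hg := gamma_aux k
    push_cast
    rw [show (1:ℝ)/2 - (-1-(k:ℝ)) = 3/2+k by ring]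
    calc ((-1:ℝ))^k * 1 = π / 2 * ((Real.Gamma (1/2 - (k:ℝ)))⁻¹ * ((2*(k:ℝ)+1) * (Real.Gamma (3/2 + (k:ℝ)))⁻¹)) := by
          rw [gamma_aux k]; ring
      _ = _ := by ring
  · rw [if_neg (by omega), if_neg (by omega)]
    ring
end

section
/- Let R be a commutative ring. The form {f,g} := (I f · g).coeff(−1) on Laurent series R((x)) is antisymmetric: for all f, g ∈ R((x)), (I g · f).coeff(−1) = −(I f · g).coeff(−1). -/
open HahnSeries

/-- The involution `I` on Laurent series induced by the inversion `z ↦ z⁻¹`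
of the circle, defined coefficientwise by `(I f).coeff n = (−1)^n • f.coeff n`. -/
noncomputable def circleInv {R : Type*} [CommRing R] (f : LaurentSeries R) :
    LaurentSeries R where
  coeff n := ((Int.negOnePow n : ℤ) : ℤ) • f.coeff n
  isPWO_support' := f.isPWO_support'.mono (by
    intro n hn
    simp only [Function.mem_support, ne_eq] at hn ⊢
    intro h
    exact hn (by rw [h, smul_zero]))

lemma circleInv_support_subset {R : Type*} [CommRing R] (f : LaurentSeries R) :
    (circleInv f).support ⊆ f.support := by
  intro n hn
  simp only [HahnSeries.mem_support] at hn ⊢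
  intro h
  apply hn
  show ((Int.negOnePow n : ℤ) : ℤ) • f.coeff n = 0
  rw [h, smul_zero]

/-- The form `{f,g} := (I f · g).coeff (−1)` on `R((x))` is antisymmetric. -/
theorem symplectic_form_antisymm {R : Type*} [CommRing R] (f g : LaurentSeries R) :
    (circleInv g * f).coeff (-1) = -((circleInv f * g).coeff (-1)) := by
  rw [coeff_mul_left' g.isPWO_support' (circleInv_support_subset g),
    coeff_mul_left' f.isPWO_support' (circleInv_support_subset f), ← Finset.sum_neg_distrib]
  refine Finset.sum_nbij' (fun ij => ij.swap) (fun ij => ij.swap) ?_ ?_ ?_ ?_ ?_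
  · intro ij hij
    simp only [Finset.mem_addAntidiagonal, Prod.fst_swap, Prod.snd_swap] at hij ⊢
    exact ⟨hij.2.1, hij.1, by omega⟩
  · intro ij hij
    simp only [Finset.mem_addAntidiagonal, Prod.fst_swap, Prod.snd_swap] at hij ⊢
    exact ⟨hij.2.1, hij.1, by omega⟩
  · intro ij _; rfl
  · intro ij _; rfl
  · intro ij hij
    simp only [Finset.mem_addAntidiagonal] at hij
    obtain ⟨i, j⟩ := ij
    simp only [Prod.swap_prod_mk, circleInv, HahnSeries.coeff] at *
    have hj : j = -1 - i := by omega
    subst hj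
    have : (-1 - i).negOnePow = -i.negOnePow := by
      rw [Int.negOnePow_sub]
      simp [Int.negOnePow_neg]
    rw [this]
    simp only [zsmul_eq_mul]
    push_cast
    ring
end

section
/- Let A be a commutative ring and let f ∈ A((x)) be a Laurent series such that f.coeff 0 is a unit of A and f.coeff n is nilpotent for every integer n < 0. Then f is a unit of the ring A((x)). (This is the multiplicative invertibility underlying the group Ǧ of invertible nil-Laurent series of §3.2: Laurent series with g₀ a unit and nilpotent coefficients in negative degrees are invertible.) -/
open HahnSeries

/-- A nil-Laurent series is invertible: if `f ∈ A((x))` has `f.coeff 0` a unit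
of `A` and `f.coeff n` nilpotent for every `n < 0`, then `f` is a unit of the
ring `A((x))` of Laurent series. -/
theorem nilLaurent_isUnit {A : Type*} [CommRing A] (f : LaurentSeries A)
    (h0 : IsUnit (f.coeff 0)) (hneg : ∀ n : ℤ, n < 0 → IsNilpotent (f.coeff n)) :
    IsUnit f := by
  by_cases hf : f = 0
  · subst hf
    simp only [HahnSeries.coeff_zero, isUnit_zero_iff] at h0
    haveI : Subsingleton A := subsingleton_of_zero_eq_one h0
    haveI : Subsingleton (LaurentSeries A) :=
      ⟨fun a b => by ext n; exact Subsingleton.elim _ _⟩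
    exact isUnit_of_subsingleton 0
  -- the set of negative indices in the support is finite
  have hS : (f.support ∩ Set.Iio 0).Finite := by
    apply (Set.finite_Icc f.order (-1)).subset
    rintro n ⟨hn1, hn2⟩
    refine ⟨HahnSeries.order_le_of_coeff_ne_zero ?_, by
      simp only [Set.mem_Iio] at hn2; omega⟩
    exact (HahnSeries.mem_support f n).mp hn1
  set S : Finset ℤ := hS.toFinset with hSdef
  have hSmem : ∀ n : ℤ, n ∈ S ↔ f.coeff n ≠ 0 ∧ n < 0 := by
    intro n
    simp [hSdef, Set.Finite.mem_toFinset, HahnSeries.mem_support, and_comm]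
  -- the negative part
  set g : LaurentSeries A := ∑ n ∈ S, HahnSeries.single n (f.coeff n) with hgdef
  have hgc : ∀ m : ℤ, g.coeff m = ∑ n ∈ S, (HahnSeries.single n (f.coeff n)).coeff m := by
    intro m
    rw [hgdef]
    exact map_sum (HahnSeries.coeff.addMonoidHom m) _ S
  have hgc' : ∀ m : ℤ, g.coeff m = if m ∈ S then f.coeff m else 0 := by
    intro m
    rw [hgc]
    rw [Finset.sum_congr rfl (fun n _ => HahnSeries.coeff_single (a := n) (b := m)
      (r := f.coeff n))]
    simp only [eq_comm (a := m)]
    exact Finset.sum_ite_eq' S m (fun n => f.coeff n)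
  have hgnil : IsNilpotent g := by
    rw [hgdef]
    apply isNilpotent_sum
    intro n hn
    obtain ⟨hne, hlt⟩ := (hSmem n).mp hn
    obtain ⟨k, hk⟩ := hneg n hlt
    exact ⟨k, by rw [HahnSeries.single_pow, hk, HahnSeries.single_eq_zero]⟩
  -- the nonnegative part
  set h : LaurentSeries A := f - g with hhdef
  have hhc : ∀ m : ℤ, h.coeff m = f.coeff m - (if m ∈ S then f.coeff m else 0) := by
    intro m
    rw [hhdef, HahnSeries.coeff_sub, hgc' m]
  have hhneg : ∀ m : ℤ, m < 0 → h.coeff m = 0 := by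
    intro m hm
    rw [hhc m]
    by_cases hmS : m ∈ S
    · simp [hmS]
    · have : f.coeff m = 0 := by
        by_contra hcon
        exact hmS ((hSmem m).mpr ⟨hcon, hm⟩)
      simp [hmS, this]
  have hh0 : h.coeff 0 = f.coeff 0 := by
    rw [hhc 0]
    have : (0 : ℤ) ∉ S := fun hc => absurd ((hSmem 0).mp hc).2 (lt_irrefl 0)
    simp [this]
  -- h comes from a power series
  set p : PowerSeries A := PowerSeries.mk (fun k => h.coeff k) with hpdef
  have hph : HahnSeries.ofPowerSeries ℤ A p = h := by
    ext n
    cases n with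
    | ofNat m =>
      rw [Int.ofNat_eq_coe, HahnSeries.ofPowerSeries_apply_coeff, hpdef,
        PowerSeries.coeff_mk]
    | negSucc m =>
      rw [HahnSeries.ofPowerSeries_apply, HahnSeries.embDomain_notin_range,
        hhneg _ (Int.negSucc_lt_zero m)]
      rintro ⟨k, hk⟩
      have hk' : (k : ℤ) = Int.negSucc m := hk
      rw [Int.negSucc_eq] at hk'
      omega
  have hpu : IsUnit p := by
    rw [PowerSeries.isUnit_iff_constantCoeff, hpdef]
    simpa [PowerSeries.constantCoeff_mk, hh0] using h0
  have hhu : IsUnit h := hph ▸ hpu.map (HahnSeries.ofPowerSeries ℤ A)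
  have : f = h + g := by rw [hhdef]; ring
  rw [this]
  exact hgnil.isUnit_add_left_of_commute hhu (Commute.all _ _)
end
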